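/- For n couples (groups of size 2) and m = 2n goods, a PROP1 allocation always exists: one can assign goods so that each agent receives at least one of their n most valued goods (after first satisfying groups where both agents share a good among their top n, then applying Hall's theorem to match remaining agents to remaining goods). -/

import Mathlib

open Finset

lemma filter_le_card (m k : ℕ) : ((Finset.univ : Finset (Fin m)).filter fun i : Fin m => k ≤ (i : ℕ)).card = m - k := by
  rcases le_or_gt m k with h | h
  · have he : ((Finset.univ : Finset (Fin m)).filter fun i : Fin m => k ≤ (i : ℕ)) = ∅ := by
      ext x; simp only [mem_filter, mem_univ, true_and, notMem_empty, iff_false]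
      have := x.isLt; omega
    rw [he]; simp; omega
  · have he : ((Finset.univ : Finset (Fin m)).filter fun i : Fin m => k ≤ (i : ℕ)) = Finset.Ici ⟨k, h⟩ := by
      ext x; simp [Fin.le_def]
    rw [he, Fin.card_Ici]

lemma exists_topset (n : ℕ) (hn : 0 < n) (v : Fin (2*n) → ℝ) :
    ∃ T : Finset (Fin (2*n)), T.card = n ∧
      ∀ a ∈ T, (Finset.univ.filter fun x => v a < v x).card ≤ n - 1 := by
  classical
  set σ := Tuple.sort v with hσ
  refine ⟨(Finset.univ.filter fun j : Fin (2*n) => n ≤ (j:ℕ)).image σ, ?_, ?_⟩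
  · rw [Finset.card_image_of_injective _ σ.injective, filter_le_card]; omega
  · intro a ha
    simp only [Finset.mem_image, mem_filter, mem_univ, true_and] at ha
    obtain ⟨j, hj, rfl⟩ := ha
    have hsub : (Finset.univ.filter fun x => v (σ j) < v x) ⊆
        (Finset.univ.filter fun i : Fin (2*n) => (j:ℕ)+1 ≤ (i:ℕ)).image σ := by
      intro x hx
      simp only [mem_filter, mem_univ, true_and] at hx
      refine Finset.mem_image.2 ⟨σ.symm x, ?_, by simp⟩
      simp only [mem_filter, mem_univ, true_and]
      by_contra hcon
      have hle : σ.symm x ≤ j := by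
        rw [Fin.le_def]; omega
      have := Tuple.monotone_sort v hle
      simp only [Function.comp_apply, ← hσ, Equiv.apply_symm_apply] at this
      exact absurd hx (not_lt.2 this)
    calc (Finset.univ.filter fun x => v (σ j) < v x).card
        ≤ ((Finset.univ.filter fun i : Fin (2*n) => (j:ℕ)+1 ≤ (i:ℕ)).image σ).card :=
          Finset.card_le_card hsub
      _ = 2*n - ((j:ℕ)+1) := by
          rw [Finset.card_image_of_injective _ σ.injective, filter_le_card]
      _ ≤ n - 1 := by have := j.isLt; omega

lemma value_lemma (n : ℕ) (hn : 0 < n) (v : Fin (2*n) → ℝ) (hv : ∀ x, 0 ≤ v x)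
    (B : Finset (Fin (2*n))) (a : Fin (2*n)) (ha : a ∈ B)
    (hrank : (Finset.univ.filter fun x => v a < v x).card ≤ n - 1) :
    ∃ C : Finset (Fin (2*n)), Disjoint C B ∧ C.card ≤ 1 ∧
      (∑ x, v x) / n ≤ ∑ x ∈ B ∪ C, v x := by
  classical
  have hn' : (1:ℝ) ≤ (n:ℝ) := by exact_mod_cast hn
  by_cases hB : Bᶜ = ∅
  · have hBu : B = Finset.univ := by
      rwa [Finset.compl_eq_empty_iff] at hB
    refine ⟨∅, disjoint_empty_left _, by simp, ?_⟩
    rw [Finset.union_empty, hBu]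
    exact div_le_self (Finset.sum_nonneg fun x _ => hv x) hn'
  · obtain ⟨c, hcmem, hcmax⟩ := Finset.exists_max_image Bᶜ v (Finset.nonempty_iff_ne_empty.2 hB)
    have hcB : c ∉ B := Finset.mem_compl.1 hcmem
    have hac : a ≠ c := fun h => hcB (h ▸ ha)
    refine ⟨{c}, by simpa using hcB, by simp, ?_⟩
    have hBc : B ∪ {c} = insert c B := by ext x; simp [or_comm]
    rw [hBc]
    set S := insert c B with hS
    have haS : a ∈ S := Finset.mem_insert_of_mem ha
    have hcS : c ∈ S := Finset.mem_insert_self c B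
    have hpair : {a, c} ⊆ S := by
      intro x hx; rcases Finset.mem_insert.1 hx with rfl | hx
      · exact haS
      · rwa [Finset.mem_singleton.1 hx]
    have hsum_pair : v a + v c ≤ ∑ x ∈ S, v x := by
      have := Finset.sum_le_sum_of_subset_of_nonneg hpair (fun x _ _ => hv x)
      rwa [Finset.sum_pair hac] at this
    have hScard : 2 ≤ S.card := by
      have := Finset.card_le_card hpair
      rwa [Finset.card_pair hac] at this
    have hSc_card : Sᶜ.card ≤ 2*n - 2 := by
      rw [Finset.card_compl]
      simp only [Fintype.card_fin]
      omega
    -- bounds on sums over the complement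
    have hvc : ∀ x ∈ Sᶜ, v x ≤ v c := by
      intro x hx
      have : x ∉ B := fun h => (Finset.mem_compl.1 hx) (Finset.mem_insert_of_mem h)
      exact hcmax x (Finset.mem_compl.2 this)
    set t := (Sᶜ.filter fun x => v a < v x).card with hts
    set r := (Sᶜ.filter fun x => ¬ v a < v x).card with hrs
    have htr : t + r = Sᶜ.card := Finset.card_filter_add_card_filter_not _
    have ht : t ≤ n - 1 := by
      refine le_trans (Finset.card_le_card ?_) hrank
      intro x hx; simp only [mem_filter] at hx ⊢; exact ⟨Finset.mem_univ x, hx.2⟩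
    have h1 : ∑ x ∈ Sᶜ.filter (fun x => v a < v x), v x ≤ (t:ℝ) * v c := by
      have := Finset.sum_le_card_nsmul (Sᶜ.filter fun x => v a < v x) v (v c)
        (fun x hx => hvc x (Finset.mem_filter.1 hx).1)
      simpa only [nsmul_eq_mul] using this
    have h2 : ∑ x ∈ Sᶜ.filter (fun x => ¬ v a < v x), v x ≤ (r:ℝ) * v a := by
      have := Finset.sum_le_card_nsmul (Sᶜ.filter fun x => ¬ v a < v x) v (v a)
        (fun x hx => not_lt.1 (Finset.mem_filter.1 hx).2)
      simpa only [nsmul_eq_mul] using this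
    have h2' : ∑ x ∈ Sᶜ.filter (fun x => ¬ v a < v x), v x ≤ (r:ℝ) * v c := by
      have := Finset.sum_le_card_nsmul (Sᶜ.filter fun x => ¬ v a < v x) v (v c)
        (fun x hx => hvc x (Finset.mem_filter.1 hx).1)
      simpa only [nsmul_eq_mul] using this
    have hsplit : ∑ x ∈ Sᶜ, v x
        = ∑ x ∈ Sᶜ.filter (fun x => v a < v x), v x
          + ∑ x ∈ Sᶜ.filter (fun x => ¬ v a < v x), v x :=
      (Finset.sum_filter_add_sum_filter_not _ _ _).symm
    -- cast facts
    have htR : (t:ℝ) ≤ (n:ℝ) - 1 := by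
      have : (t:ℝ) ≤ ((n-1 : ℕ) : ℝ) := by exact_mod_cast ht
      rwa [Nat.cast_sub hn, Nat.cast_one] at this
    have htrR : (t:ℝ) + (r:ℝ) ≤ 2*(n:ℝ) - 2 := by
      have h' : t + r ≤ 2*n - 2 := htr ▸ hSc_card
      have : ((t + r : ℕ) : ℝ) ≤ ((2*n - 2 : ℕ) : ℝ) := by exact_mod_cast h'
      push_cast [Nat.cast_sub (by omega : 2 ≤ 2*n)] at this
      linarith
    have hkey : ∑ x ∈ Sᶜ, v x ≤ ((n:ℝ) - 1) * (v a + v c) := by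
      rcases le_total (v a) (v c) with hav | hav
      · rw [hsplit]
        have hr0 : (0:ℝ) ≤ r := Nat.cast_nonneg r
        have ht0 : (0:ℝ) ≤ t := Nat.cast_nonneg t
        nlinarith [hv a, hv c, h1, h2]
      · rw [hsplit]
        nlinarith [hv a, hv c, h1, h2', (Nat.cast_nonneg t : (0:ℝ) ≤ t), (Nat.cast_nonneg r : (0:ℝ) ≤ r)]
    have htot : ∑ x, v x = ∑ x ∈ S, v x + ∑ x ∈ Sᶜ, v x :=
      (Finset.sum_add_sum_compl S v).symm
    rw [div_le_iff₀ (by linarith : (0:ℝ) < (n:ℝ))]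
    have hSnonneg : 0 ≤ ∑ x ∈ S, v x := Finset.sum_nonneg fun x _ => hv x
    nlinarith [hsum_pair, hkey, htot]

lemma exists_assignment (n : ℕ) (hn : 0 < n) (T : Fin n → Fin 2 → Finset (Fin (2*n)))
    (hT : ∀ g i, n ≤ (T g i).card) :
    ∃ π : Fin (2*n) → Fin n, ∀ g i, ∃ a ∈ T g i, π a = g := by
  classical
  have h2n : 0 < 2*n := by omega
  -- shared top goods of a group
  set D : Fin n → Finset (Fin (2*n)) := fun g => T g 0 ∩ T g 1 with hD
  have hDsub : ∀ g (i : Fin 2), D g ⊆ T g i := by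
    intro g i
    have h01 : i = 0 ∨ i = 1 := by omega
    rcases h01 with rfl | rfl
    · exact Finset.inter_subset_left
    · exact Finset.inter_subset_right
  -- stage 1: maximum partial matching on shared goods
  set Q : Finset (Fin n) → Prop := fun s =>
    ∃ f : Fin n → Fin (2*n), Set.InjOn f ↑s ∧ ∀ g ∈ s, f g ∈ D g with hQ
  have hQemp : Q ∅ := ⟨fun _ => ⟨0, h2n⟩, by simp, by simp⟩
  obtain ⟨G₁, hG₁mem, hG₁max⟩ :=
    Finset.exists_max_image ((Finset.univ.powerset).filter Q) Finset.card
      ⟨∅, by simpa using hQemp⟩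
  obtain ⟨-, f₁, hf₁inj, hf₁mem⟩ := Finset.mem_filter.1 hG₁mem
  set X : Finset (Fin (2*n)) := G₁.image f₁ with hX
  have hXcard : X.card = G₁.card := Finset.card_image_of_injOn hf₁inj
  -- maximality: unmatched groups have all shared goods used
  have hDX : ∀ g ∉ G₁, D g ⊆ X := by
    intro g hg x hx
    by_contra hxX
    have hgG : (g : Fin n) ∉ (↑G₁ : Set (Fin n)) := by simpa using hg
    set f' : Fin n → Fin (2*n) := Function.update f₁ g x with hf'
    have hQ' : Q (insert g G₁) := by
      refine ⟨f', ?_, ?_⟩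
      · rw [Finset.coe_insert, Set.injOn_insert hgG]
        constructor
        · refine hf₁inj.congr ?_
          intro y hy
          have : y ≠ g := fun h => hgG (h ▸ hy)
          simp [hf', Function.update_of_ne this]
        · intro hmem
          apply hxX
          obtain ⟨y, hy, hyx⟩ := hmem
          have hyg : y ≠ g := fun h => hgG (h ▸ hy)
          rw [hf', Function.update_of_ne hyg, Function.update_self] at hyx
          exact Finset.mem_image.2 ⟨y, by simpa using hy, hyx⟩
      · intro g' hg'
        rcases Finset.mem_insert.1 hg' with rfl | hg'
        · simpa [hf'] using hx
        · have hg'g : g' ≠ g := fun h => hg (h ▸ hg')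
          rw [hf', Function.update_of_ne hg'g]
          exact hf₁mem g' hg'
    have hmem' : insert g G₁ ∈ (Finset.univ.powerset).filter Q :=
      Finset.mem_filter.2 ⟨Finset.mem_powerset.2 (Finset.subset_univ _), hQ'⟩
    have := hG₁max _ hmem'
    rw [Finset.card_insert_of_notMem hg] at this
    omega
  -- stage 2: Hall's theorem for remaining agents
  set ι := {p : Fin n × Fin 2 // p.1 ∉ G₁} with hι
  set t : ι → Finset (Fin (2*n)) := fun p => T p.1.1 p.1.2 \ X with ht
  have hcardt : ∀ p : ι, n - G₁.card ≤ (t p).card := by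
    intro p
    have h1 := Finset.card_le_card_sdiff_add_card (s := T p.1.1 p.1.2) (t := X)
    have h2 := hT p.1.1 p.1.2
    have h3 := hXcard
    show n - G₁.card ≤ (T p.1.1 p.1.2 \ X).card
    omega
  have hhall : ∀ s : Finset ι, s.card ≤ (s.biUnion t).card := by
    intro s
    rcases s.eq_empty_or_nonempty with rfl | ⟨p₀, hp₀⟩
    · simp
    by_cases hsame : ∃ p ∈ s, ∃ q ∈ s, p.1.1 = q.1.1 ∧ p ≠ q
    · obtain ⟨p, hp, q, hq, hgroup, hne⟩ := hsame
      have hi : p.1.2 ≠ q.1.2 := by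
        intro h
        exact hne (Subtype.ext (Prod.ext hgroup h))
      have hdisj : Disjoint (t p) (t q) := by
        rw [Finset.disjoint_left]
        intro x hx1 hx2
        rw [ht, Finset.mem_sdiff] at hx1 hx2
        apply hx1.2
        apply hDX p.1.1 p.2
        have h01 : (p.1.2 = 0 ∧ q.1.2 = 1) ∨ (p.1.2 = 1 ∧ q.1.2 = 0) := by omega
        rcases h01 with ⟨h1, h2⟩ | ⟨h1, h2⟩
        · exact Finset.mem_inter.2 ⟨h1 ▸ hx1.1, by rw [← hgroup] at hx2 ; exact h2 ▸ hx2.1⟩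
        · exact Finset.mem_inter.2 ⟨by rw [← hgroup] at hx2 ; exact h2 ▸ hx2.1, h1 ▸ hx1.1⟩
      have hsub : t p ∪ t q ⊆ s.biUnion t :=
        Finset.union_subset (Finset.subset_biUnion_of_mem t hp) (Finset.subset_biUnion_of_mem t hq)
      have hbig : 2 * (n - G₁.card) ≤ (s.biUnion t).card := by
        have := Finset.card_le_card hsub
        rw [Finset.card_union_of_disjoint hdisj] at this
        have h1 := hcardt p
        have h2 := hcardt q
        omega
      have hscard : s.card ≤ (G₁ᶜ ×ˢ (Finset.univ : Finset (Fin 2))).card := by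
        apply Finset.card_le_card_of_injOn (fun p => p.1)
        · intro p hp
          simp only [Finset.mem_product, Finset.mem_compl, Finset.mem_univ, and_true]
          simpa using p.2
        · intro p _ q _ h
          exact Subtype.ext h
      rw [Finset.card_product, Finset.card_compl, Fintype.card_fin, Finset.card_univ, Fintype.card_fin] at hscard
      omega
    · push_neg at hsame
      have hinj : Set.InjOn (fun p : ι => p.1.1) ↑s := by
        intro p hp q hq h
        exact hsame p (by simpa using hp) q (by simpa using hq) h
      have h1 : s.card ≤ G₁ᶜ.card := by
        rw [← Finset.card_image_of_injOn hinj]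
        apply Finset.card_le_card
        intro g hg
        obtain ⟨p, _, rfl⟩ := Finset.mem_image.1 hg
        exact Finset.mem_compl.2 p.2
      rw [Finset.card_compl, Fintype.card_fin] at h1
      have h2 : (t p₀).card ≤ (s.biUnion t).card :=
        Finset.card_le_card (Finset.subset_biUnion_of_mem t hp₀)
      have h3 := hcardt p₀
      omega
  obtain ⟨F, hFinj, hFmem⟩ := (Finset.all_card_le_biUnion_card_iff_exists_injective t).1 hhall
  -- assemble the allocation
  set π : Fin (2*n) → Fin n := fun x =>
    if h : ∃ g, g ∈ G₁ ∧ f₁ g = x then h.choose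
    else if h2 : ∃ p : ι, F p = x then h2.choose.1.1
    else ⟨0, hn⟩ with hπ
  refine ⟨π, fun g i => ?_⟩
  by_cases hg : g ∈ G₁
  · refine ⟨f₁ g, hDsub g i (hf₁mem g hg), ?_⟩
    have hex : ∃ g', g' ∈ G₁ ∧ f₁ g' = f₁ g := ⟨g, hg, rfl⟩
    rw [hπ]
    simp only [dif_pos hex]
    have hspec := hex.choose_spec
    exact hf₁inj (by simpa using hspec.1) (by simpa using hg) hspec.2
  · set p : ι := ⟨(g, i), hg⟩ with hp
    have hmem := hFmem p
    rw [ht, Finset.mem_sdiff] at hmem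
    refine ⟨F p, hmem.1, ?_⟩
    have hnex : ¬ ∃ g', g' ∈ G₁ ∧ f₁ g' = F p := by
      rintro ⟨g', hg', hgx⟩
      exact hmem.2 (Finset.mem_image.2 ⟨g', hg', hgx⟩)
    have hex2 : ∃ p' : ι, F p' = F p := ⟨p, rfl⟩
    rw [hπ]
    simp only [dif_neg hnex, dif_pos hex2]
    have hspec := hex2.choose_spec
    have : hex2.choose = p := hFinj hspec
    rw [this]

/-- For `n` couples and `m = 2n` goods, a PROP1 allocation always exists. -/
theorem stmt_8 (n : ℕ) (hn : 0 < n) (u : Fin n → Fin 2 → Fin (2 * n) → ℝ)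
    (hnn : ∀ g i a, 0 ≤ u g i a) :
    ∃ π : Fin (2 * n) → Fin n, ∀ (g : Fin n) (i : Fin 2),
      ∃ C : Finset (Fin (2 * n)),
        Disjoint C (Finset.univ.filter (fun a => π a = g)) ∧ C.card ≤ 1 ∧
        (∑ a, u g i a) / n ≤
          ∑ a ∈ Finset.univ.filter (fun a => π a = g) ∪ C, u g i a := by
  classical
  choose T hTcard hTrank using fun (g : Fin n) (i : Fin 2) => exists_topset n hn (u g i)
  obtain ⟨π, hπ⟩ := exists_assignment n hn T (fun g i => (hTcard g i).ge)
  refine ⟨π, fun g i => ?_⟩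
  obtain ⟨a, haT, haπ⟩ := hπ g i
  exact value_lemma n hn (u g i) (hnn g i) (Finset.univ.filter (fun a => π a = g)) a
    (Finset.mem_filter.2 ⟨Finset.mem_univ a, haπ⟩) (hTrank g i a haT)
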